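/- Let G be a strongly connected digraph. G has the Riemann–Roch property (i.e., there exist a chip-distribution K and an integer t such that dist(x) − dist(K − x) = t − deg(x) for every chip-distribution x) if and only if every minimally non-terminating chip-distribution on G has degree dist(0) and there exists a chip-distribution K such that for every minimally non-terminating chip-distribution x, K − x is also minimally non-terminating; moreover, in this case the Riemann–Roch formula holds with this K as canonical distribution and t = dist(0). -/
import Mathlib


open Finset

variable {V : Type} [Fintype V] [DecidableEq V]

/-- The outdegree of a vertex `v` in the multidigraph with multiplicity function `m`
(`m u v` is the number of directed edges from `u` to `v`). -/
def outdeg (m : V → V → ℕ) (v : V) : ℤ := ∑ u, (m v u : ℤ)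

/-- The indegree of a vertex. -/
def indeg (m : V → V → ℕ) (v : V) : ℤ := ∑ u, (m u v : ℤ)

/-- The digraph is loopless. -/
def Loopless (m : V → V → ℕ) : Prop := ∀ v, m v v = 0

/-- The digraph is strongly connected: every vertex reaches every vertex on a directed path. -/
def StronglyConnected (m : V → V → ℕ) : Prop :=
  ∀ u v : V, Relation.ReflTransGen (fun a b => 0 < m a b) u v

/-- Firing vertex `v` in chip-distribution `x`: `v` sends a chip along each outgoing edge. -/
def fire (m : V → V → ℕ) (x : V → ℤ) (v : V) : V → ℤ :=
  fun u => x u + (m v u : ℤ) - (if u = v then outdeg m v else 0)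

/-- The degree (total number of chips) of a chip-distribution / divisor. -/
def degSum (x : V → ℤ) : ℤ := ∑ v, x v

/-- The state of the chip-firing game after `n` steps, starting from `x` and
firing the vertices `s 0, s 1, …` in this order. -/
def gameState (m : V → V → ℕ) (x : V → ℤ) (s : ℕ → V) : ℕ → (V → ℤ)
  | 0 => x
  | n + 1 => fire m (gameState m x s n) (s n)

/-- `s` encodes an infinite legal chip-firing game starting from `x`:
at each step the fired vertex is active. -/
def InfGame (m : V → V → ℕ) (x : V → ℤ) (s : ℕ → V) : Prop :=
  ∀ n, outdeg m (s n) ≤ gameState m x s n (s n)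

/-- A chip-distribution is terminating if no infinite legal game starts from it. -/
def Terminating (m : V → V → ℕ) (x : V → ℤ) : Prop :=
  ¬ ∃ s : ℕ → V, InfGame m x s

/-- The Laplacian of the digraph applied to `z`. -/
def lap (m : V → V → ℕ) (z : V → ℤ) : V → ℤ :=
  fun u => (∑ v, (m v u : ℤ) * z v) - outdeg m u * z u

/-- Linear equivalence: `x ∼ y` iff `x = y + L z` for some integer vector `z`. -/
def LinEquiv (m : V → V → ℕ) (x y : V → ℤ) : Prop :=
  ∃ z : V → ℤ, x = y + lap m z

/-- The distance of `x` from the non-terminating distributions: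
the minimum degree of a nonnegative `y` such that `x + y` is non-terminating. -/
noncomputable def chipDist (m : V → V → ℕ) (x : V → ℤ) : ℕ :=
  sInf {n : ℕ | ∃ y : V → ℤ, 0 ≤ y ∧ degSum y = (n : ℤ) ∧ ¬ Terminating m (x + y)}

/-- A chip-distribution is minimally non-terminating if it is non-terminating
but removing one chip from any vertex makes it terminating. -/
def MinNonTerm (m : V → V → ℕ) (x : V → ℤ) : Prop :=
  ¬ Terminating m x ∧
    ∀ v : V, Terminating m (fun u => x u - (if u = v then 1 else 0))
section Aux
variable {V : Type} [Fintype V] [DecidableEq V]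

lemma degSum_fire (m : V → V → ℕ) (x : V → ℤ) (v : V) :
    degSum (fire m x v) = degSum x := by
  unfold degSum fire
  rw [Finset.sum_sub_distrib, Finset.sum_add_distrib]
  have h1 : (∑ u : V, if u = v then outdeg m v else 0) = outdeg m v := by
    simp
  rw [h1]
  unfold outdeg
  ring

lemma fire_mono (m : V → V → ℕ) {x y : V → ℤ} (h : x ≤ y) (v : V) :
    fire m x v ≤ fire m y v := by
  intro u
  simp only [fire]
  have h1 : x u ≤ y u := h u
  by_cases hu : u = v
  · subst hu; simp only [if_pos rfl]; omega
  · simp only [if_neg hu]; omega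

lemma gameState_mono (m : V → V → ℕ) {x y : V → ℤ} (h : x ≤ y) (s : ℕ → V) (n : ℕ) :
    gameState m x s n ≤ gameState m y s n := by
  induction n with
  | zero => exact h
  | succ n ih => exact fire_mono m ih (s n)

lemma nonterm_mono (m : V → V → ℕ) {x y : V → ℤ} (h : x ≤ y)
    (hx : ¬ Terminating m x) : ¬ Terminating m y := by
  rw [Terminating, not_not] at *
  obtain ⟨s, hs⟩ := hx
  exact ⟨s, fun n => le_trans (hs n) (gameState_mono m h s n (s n))⟩

lemma degSum_gameState (m : V → V → ℕ) (x : V → ℤ) (s : ℕ → V) (n : ℕ) :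
    degSum (gameState m x s n) = degSum x := by
  induction n with
  | zero => rfl
  | succ n ih => rw [gameState, degSum_fire, ih]

omit [DecidableEq V] in
lemma outdeg_nonneg (m : V → V → ℕ) (v : V) : 0 ≤ outdeg m v := by
  unfold outdeg; positivity

lemma exists_fireable [Nonempty V] (m : V → V → ℕ) {y : V → ℤ}
    (hd : ∑ v, outdeg m v ≤ degSum y) : ∃ v, outdeg m v ≤ y v := by
  by_contra hne
  push_neg at hne
  have h2 : degSum y ≤ ∑ v, (outdeg m v - 1) :=
    Finset.sum_le_sum (fun v _ => by have := hne v; omega)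
  rw [Finset.sum_sub_distrib] at h2
  have hcard : (0:ℤ) < (Finset.univ : Finset V).card := by
    exact_mod_cast Finset.card_pos.2 Finset.univ_nonempty
  simp only [Finset.sum_const, nsmul_eq_mul, mul_one] at h2
  omega

/-- pick a fireable vertex if one exists -/
noncomputable def pick (m : V → V → ℕ) (y : V → ℤ) [Nonempty V] : V :=
  if h : ∃ v, outdeg m v ≤ y v then h.choose else Classical.arbitrary V

lemma pick_spec [Nonempty V] (m : V → V → ℕ) (y : V → ℤ)
    (h : ∃ v, outdeg m v ≤ y v) : outdeg m (pick m y) ≤ y (pick m y) := by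
  have : pick m y = h.choose := dif_pos h
  rw [this]
  exact h.choose_spec

noncomputable def pickSeq (m : V → V → ℕ) (x : V → ℤ) [Nonempty V] : ℕ → (V → ℤ)
  | 0 => x
  | n + 1 => fire m (pickSeq m x n) (pick m (pickSeq m x n))

lemma nonterm_of_big [Nonempty V] (m : V → V → ℕ) (hloop : Loopless m) (x : V → ℤ)
    (hx : ∀ v, outdeg m v ≤ x v) : ¬ Terminating m x := by
  have hdeg : (∑ v, outdeg m v) ≤ degSum x := Finset.sum_le_sum (fun v _ => hx v)
  have hinv : ∀ n, (0 ≤ pickSeq m x n) ∧ degSum (pickSeq m x n) = degSum x := by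
    intro n
    induction n with
    | zero =>
      refine ⟨fun v => le_trans (outdeg_nonneg m v) (hx v), rfl⟩
    | succ n ih =>
      obtain ⟨h0, hd⟩ := ih
      have hex : ∃ v, outdeg m v ≤ pickSeq m x n v := exists_fireable m (hd ▸ hdeg)
      have hpick := pick_spec m (pickSeq m x n) hex
      constructor
      · intro u
        show (0:ℤ) ≤ fire m (pickSeq m x n) (pick m (pickSeq m x n)) u
        simp only [fire]
        by_cases hu : u = pick m (pickSeq m x n)
        · rw [if_pos hu, hu]
          have hl : (m (pick m (pickSeq m x n)) (pick m (pickSeq m x n)) : ℤ) = 0 := by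
            exact_mod_cast congrArg Nat.cast (hloop _)
          omega
        · rw [if_neg hu]
          have h1 : (0:ℤ) ≤ pickSeq m x n u := h0 u
          have h2 : (0:ℤ) ≤ (m (pick m (pickSeq m x n)) u : ℤ) := Int.natCast_nonneg _
          omega
      · rw [pickSeq, degSum_fire, hd]
  refine fun hterm => hterm ⟨fun n => pick m (pickSeq m x n), ?_⟩
  have hgs : ∀ n, gameState m x (fun n => pick m (pickSeq m x n)) n = pickSeq m x n := by
    intro n
    induction n with
    | zero => rfl
    | succ n ih => rw [gameState, ih]; rfl
  intro n
  rw [hgs]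
  obtain ⟨h0, hd⟩ := hinv n
  exact pick_spec m (pickSeq m x n) (exists_fireable m (hd ▸ hdeg))

end Aux
section Aux2
variable {V : Type} [Fintype V] [DecidableEq V]

lemma gameState_succ_apply (m : V → V → ℕ) (x : V → ℤ) (s : ℕ → V) (n : ℕ) (u : V) :
    gameState m x s (n+1) u
      = gameState m x s n u + (m (s n) u : ℤ) - (if u = s n then outdeg m (s n) else 0) := rfl

lemma state_nonneg_of_fired (m : V → V → ℕ) (hloop : Loopless m) {x : V → ℤ} {s : ℕ → V}
    (hs : InfGame m x s) {v : V} {n : ℕ} (h : ∃ k, k < n ∧ s k = v) :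
    0 ≤ gameState m x s n v := by
  induction n with
  | zero => obtain ⟨k, hk, _⟩ := h; omega
  | succ n ih =>
    rw [gameState_succ_apply]
    by_cases hv : v = s n
    · rw [if_pos hv]
      have hleg := hs n
      rw [← hv] at hleg
      have hl : (m (s n) v : ℤ) = 0 := by
        rw [hv]; exact_mod_cast congrArg Nat.cast (hloop (s n))
      rw [← hv]
      omega
    · rw [if_neg hv]
      have h1 : (0:ℤ) ≤ (m (s n) v : ℤ) := Int.natCast_nonneg _
      have h2 : 0 ≤ gameState m x s n v := by
        apply ih
        obtain ⟨k, hk, hkv⟩ := h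
        refine ⟨k, ?_, hkv⟩
        rcases Nat.lt_succ_iff_lt_or_eq.mp hk with h | h
        · exact h
        · exfalso; apply hv; rw [← hkv, h]
      omega

lemma crossing {m : V → V → ℕ} {P : V → Prop} {a c : V}
    (h : Relation.ReflTransGen (fun a b => 0 < m a b) a c) (ha : P a) (hc : ¬ P c) :
    ∃ u w, P u ∧ ¬ P w ∧ 0 < m u w := by
  induction h with
  | refl => exact absurd ha hc
  | @tail b c hab hbc ih =>
    by_cases hb : P b
    · exact ⟨b, c, hb, hc, hbc⟩
    · exact ih hb

lemma exists_fio (s : ℕ → V) : ∃ v, ∀ N, ∃ n, N ≤ n ∧ s n = v := by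
  obtain ⟨v, hv⟩ := Finite.exists_infinite_fiber s
  refine ⟨v, fun N => ?_⟩
  have hinf : (s ⁻¹' {v}).Infinite := (Set.infinite_coe_iff (s := s ⁻¹' {v})).mp hv
  obtain ⟨n, hn, hlt⟩ := hinf.exists_gt N
  exact ⟨n, le_of_lt hlt, hn⟩

lemma gameState_add (m : V → V → ℕ) (x : V → ℤ) (s : ℕ → V) (N k : ℕ) :
    gameState m x s (N + k) = gameState m (gameState m x s N) (fun i => s (N + i)) k := by
  induction k with
  | zero => rfl
  | succ k ih =>
    show fire m (gameState m x s (N + k)) (s (N + k))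
      = fire m (gameState m (gameState m x s N) (fun i => s (N + i)) k) (s (N + k))
    rw [ih]

lemma all_fire_io [Nonempty V] (m : V → V → ℕ) (hconn : StronglyConnected m)
    (hloop : Loopless m) {x : V → ℤ} {s : ℕ → V} (hs : InfGame m x s) (v₀ : V) :
    ∀ N, ∃ n, N ≤ n ∧ s n = v₀ := by
  classical
  by_contra hv₀
  set P : V → Prop := fun v => ∀ N, ∃ n, N ≤ n ∧ s n = v with hP
  obtain ⟨a, hafio⟩ := exists_fio s
  obtain ⟨u, w, hu, hw, huw⟩ := crossing (P := P) (hconn a v₀) hafio hv₀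
  set A : Finset V := Finset.univ.filter P with hA
  set Φ : ℕ → ℤ := fun n => ∑ p ∈ A, gameState m x s n p with hΦ
  -- choose bounds
  have hbound : ∀ v : V, ∃ N : ℕ,
      (P v → ∃ k, k < N ∧ s k = v) ∧ (¬ P v → ∀ n, N ≤ n → s n ≠ v) := by
    intro v
    by_cases hv : P v
    · obtain ⟨n, _, hn⟩ := hv 0
      exact ⟨n + 1, fun _ => ⟨n, Nat.lt_succ_self n, hn⟩, fun h => absurd hv h⟩
    · obtain ⟨N, hN⟩ := not_forall.mp hv
      push_neg at hN
      exact ⟨N, fun h => absurd h hv, fun _ n hn => (hN n hn)⟩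
  choose g hg using hbound
  set N₀ := Finset.univ.sup g with hN₀
  have hgle : ∀ v, g v ≤ N₀ := fun v => Finset.le_sup (Finset.mem_univ v)
  have hfired : ∀ v, P v → ∃ k, k < N₀ ∧ s k = v := by
    intro v hv
    obtain ⟨k, hk, hkv⟩ := (hg v).1 hv
    exact ⟨k, lt_of_lt_of_le hk (hgle v), hkv⟩
  have hnofire : ∀ n, N₀ ≤ n → P (s n) := by
    intro n hn
    by_contra hps
    exact (hg (s n)).2 hps n (le_trans (hgle (s n)) hn) rfl
  have hΦnonneg : ∀ n, N₀ ≤ n → 0 ≤ Φ n := by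
    intro n hn
    apply Finset.sum_nonneg
    intro p hp
    have hPp : P p := (Finset.mem_filter.mp hp).2
    obtain ⟨k, hk, hkp⟩ := hfired p hPp
    exact state_nonneg_of_fired m hloop hs ⟨k, lt_of_lt_of_le hk hn, hkp⟩
  -- the step computation
  have hstepEq : ∀ n, N₀ ≤ n →
      Φ (n+1) = Φ n + (∑ p ∈ A, (m (s n) p : ℤ)) - outdeg m (s n) := by
    intro n hn
    have hsnA : s n ∈ A := Finset.mem_filter.mpr ⟨Finset.mem_univ _, hnofire n hn⟩
    calc Φ (n+1) = ∑ p ∈ A, (gameState m x s n p + (m (s n) p : ℤ)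
          - (if p = s n then outdeg m (s n) else 0)) := by
          apply Finset.sum_congr rfl; intro p _; rw [gameState_succ_apply]
    _ = Φ n + (∑ p ∈ A, (m (s n) p : ℤ))
          - ∑ p ∈ A, (if p = s n then outdeg m (s n) else 0) := by
          rw [Finset.sum_sub_distrib, Finset.sum_add_distrib]
    _ = Φ n + (∑ p ∈ A, (m (s n) p : ℤ)) - outdeg m (s n) := by
          rw [Finset.sum_ite_eq' A (s n) (fun _ => outdeg m (s n)), if_pos hsnA]
  have hsubsum : ∀ c : V, (∑ p ∈ A, (m c p : ℤ)) ≤ outdeg m c := by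
    intro c
    unfold outdeg
    apply Finset.sum_le_sum_of_subset_of_nonneg (Finset.subset_univ A)
    intro p _ _
    exact Int.natCast_nonneg _
  have hstep : ∀ n, N₀ ≤ n → Φ (n+1) ≤ Φ n := by
    intro n hn
    rw [hstepEq n hn]
    have := hsubsum (s n)
    omega
  have hdropu : ∀ n, N₀ ≤ n → s n = u → Φ (n+1) ≤ Φ n - 1 := by
    intro n hn hsnu
    rw [hstepEq n hn, hsnu]
    have hwA : w ∉ A := by
      intro hwm
      exact hw (Finset.mem_filter.mp hwm).2
    have hins : (∑ p ∈ insert w A, (m u p : ℤ)) = (m u w : ℤ) + ∑ p ∈ A, (m u p : ℤ) :=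
      Finset.sum_insert hwA
    have hle : (∑ p ∈ insert w A, (m u p : ℤ)) ≤ outdeg m u := by
      unfold outdeg
      apply Finset.sum_le_sum_of_subset_of_nonneg (Finset.subset_univ _)
      intro p _ _
      exact Int.natCast_nonneg _
    have hmuw : (1:ℤ) ≤ (m u w : ℤ) := by exact_mod_cast huw
    omega
  have hmono : ∀ n k, N₀ ≤ n → Φ (n + k) ≤ Φ n := by
    intro n k hn
    induction k with
    | zero => exact le_refl _
    | succ k ih =>
      calc Φ (n + (k+1)) = Φ ((n + k) + 1) := by ring_nf
      _ ≤ Φ (n + k) := hstep _ (le_trans hn (Nat.le_add_right n k))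
      _ ≤ Φ n := ih
  have hdrop : ∀ j : ℕ, ∃ n, N₀ ≤ n ∧ Φ n ≤ Φ N₀ - j := by
    intro j
    induction j with
    | zero => exact ⟨N₀, le_refl _, by simp⟩
    | succ j ih =>
      obtain ⟨n, hn, hj⟩ := ih
      obtain ⟨n', hn', hsu⟩ := hu n
      have h1 : Φ n' ≤ Φ n := by
        obtain ⟨k, rfl⟩ := Nat.exists_eq_add_of_le hn'
        exact hmono n k hn
      have h2 : Φ (n' + 1) ≤ Φ n' - 1 := hdropu n' (le_trans hn hn') hsu
      refine ⟨n' + 1, le_trans (le_trans hn hn') (Nat.le_succ n'), ?_⟩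
      push_cast
      push_cast at hj
      omega
  obtain ⟨n, hn, hjj⟩ := hdrop ((Φ N₀).toNat + 1)
  have h0 : 0 ≤ Φ n := hΦnonneg n hn
  have h1 : Φ N₀ ≤ ((Φ N₀).toNat : ℤ) := Int.self_le_toNat _
  push_cast at hjj
  omega

lemma nonterm_shift [Nonempty V] (m : V → V → ℕ) (hconn : StronglyConnected m)
    (hloop : Loopless m) {x : V → ℤ} (hx : ¬ Terminating m x) :
    ∃ y : V → ℤ, 0 ≤ y ∧ degSum y = degSum x ∧ ¬ Terminating m y := by
  obtain ⟨s, hs⟩ := not_not.mp hx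
  have hall : ∀ v : V, ∃ k, s k = v := by
    intro v
    obtain ⟨n, _, hn⟩ := all_fire_io m hconn hloop hs v 0
    exact ⟨n, hn⟩
  choose f hf using hall
  set N := (Finset.univ.sup f) + 1 with hN
  refine ⟨gameState m x s N, ?_, degSum_gameState m x s N, ?_⟩
  · intro v
    show (0:ℤ) ≤ gameState m x s N v
    refine state_nonneg_of_fired m hloop hs ⟨f v, ?_, hf v⟩
    have := Finset.le_sup (f := f) (Finset.mem_univ v)
    omega
  · rw [Terminating, not_not]
    refine ⟨fun i => s (N + i), fun k => ?_⟩
    rw [← gameState_add]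
    exact hs (N + k)

end Aux2
section Aux3
variable {V : Type} [Fintype V] [DecidableEq V]

/-- degree of positive part -/
def posDeg (w : V → ℤ) : ℤ := ∑ v, max (w v) 0

omit [DecidableEq V] in
lemma posDeg_nonneg (w : V → ℤ) : 0 ≤ posDeg w :=
  Finset.sum_nonneg (fun v _ => le_max_right _ _)

omit [DecidableEq V] in
lemma posDeg_sub (w : V → ℤ) : posDeg w - posDeg (-w) = degSum w := by
  unfold posDeg degSum
  rw [← Finset.sum_sub_distrib]
  apply Finset.sum_congr rfl
  intro v _
  simp only [Pi.neg_apply]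
  exact max_zero_sub_max_neg_zero_eq_self (w v)

omit [DecidableEq V] in
lemma degSum_sub (a b : V → ℤ) : degSum (a - b) = degSum a - degSum b := by
  unfold degSum
  rw [← Finset.sum_sub_distrib]
  rfl

omit [DecidableEq V] in
lemma degSum_add (a b : V → ℤ) : degSum (a + b) = degSum a + degSum b := by
  unfold degSum
  rw [← Finset.sum_add_distrib]
  rfl

omit [DecidableEq V] in
lemma degSum_nonneg {y : V → ℤ} (hy : 0 ≤ y) : 0 ≤ degSum y :=
  Finset.sum_nonneg (fun v _ => hy v)

omit [DecidableEq V] in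
lemma degSum_mono {a b : V → ℤ} (h : a ≤ b) : degSum a ≤ degSum b :=
  Finset.sum_le_sum (fun v _ => h v)

/-- the defining set of chipDist -/
def distSet (m : V → V → ℕ) (x : V → ℤ) : Set ℕ :=
  {n : ℕ | ∃ y : V → ℤ, 0 ≤ y ∧ degSum y = (n : ℤ) ∧ ¬ Terminating m (x + y)}

lemma chipDist_eq_sInf (m : V → V → ℕ) (x : V → ℤ) : chipDist m x = sInf (distSet m x) := rfl

lemma distSet_nonempty [Nonempty V] (m : V → V → ℕ) (hloop : Loopless m) (x : V → ℤ) :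
    (distSet m x).Nonempty := by
  set M : ℤ := ∑ v, outdeg m v with hM
  set w : V → ℤ := fun v => max (x v) M with hw
  have hwx : x ≤ w := fun v => le_max_left _ _
  have hbig : ∀ v, outdeg m v ≤ w v := by
    intro v
    refine le_trans ?_ (le_max_right _ _)
    rw [hM]
    exact Finset.single_le_sum (fun u _ => outdeg_nonneg m u) (Finset.mem_univ v)
  set y : V → ℤ := w - x with hy
  have hy0 : 0 ≤ y := fun v => by
    have h1 : x v ≤ w v := hwx v
    show (0:ℤ) ≤ w v - x v
    omega
  have hxy : x + y = w := by funext v; simp [hy]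
  refine ⟨(degSum y).toNat, y, hy0, ?_, ?_⟩
  · rw [Int.toNat_of_nonneg (degSum_nonneg hy0)]
  · rw [hxy]
    exact nonterm_of_big m hloop w hbig

lemma chipDist_mem [Nonempty V] (m : V → V → ℕ) (hloop : Loopless m) (x : V → ℤ) :
    ∃ y : V → ℤ, 0 ≤ y ∧ degSum y = (chipDist m x : ℤ) ∧ ¬ Terminating m (x + y) :=
  Nat.sInf_mem (distSet_nonempty m hloop x)

lemma chipDist_le (m : V → V → ℕ) {x y : V → ℤ} (hy : 0 ≤ y)
    (hnt : ¬ Terminating m (x + y)) : (chipDist m x : ℤ) ≤ degSum y := by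
  have hmem : (degSum y).toNat ∈ distSet m x :=
    ⟨y, hy, (Int.toNat_of_nonneg (degSum_nonneg hy)).symm ▸ rfl, hnt⟩
  have := Nat.sInf_le hmem
  have h2 : ((degSum y).toNat : ℤ) = degSum y := Int.toNat_of_nonneg (degSum_nonneg hy)
  rw [chipDist_eq_sInf]
  omega

lemma chipDist_eq_zero_iff [Nonempty V] (m : V → V → ℕ) (hloop : Loopless m) (x : V → ℤ) :
    chipDist m x = 0 ↔ ¬ Terminating m x := by
  constructor
  · intro h
    obtain ⟨y, hy0, hyd, hnt⟩ := chipDist_mem m hloop x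
    rw [h] at hyd
    have hy00 : y = 0 := by
      funext v
      have h1 : ∀ v ∈ Finset.univ, (0:ℤ) ≤ y v := fun v _ => hy0 v
      have h2 := (Finset.sum_eq_zero_iff_of_nonneg h1).mp (by exact_mod_cast hyd)
      exact h2 v (Finset.mem_univ v)
    rw [hy00, add_zero] at hnt
    exact hnt
  · intro h
    have : (chipDist m x : ℤ) ≤ degSum (0 : V → ℤ) :=
      chipDist_le m (le_refl _) (by rwa [add_zero])
    have h0 : degSum (0 : V → ℤ) = 0 := Finset.sum_const_zero
    omega

lemma nonterm_of_chipDist_eq_zero [Nonempty V] (m : V → V → ℕ) (hloop : Loopless m)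
    {x : V → ℤ} (h : (chipDist m x : ℤ) = 0) : ¬ Terminating m x :=
  (chipDist_eq_zero_iff m hloop x).mp (by exact_mod_cast h)

lemma chipDist_eq_zero_of_nonterm (m : V → V → ℕ) {x : V → ℤ} (h : ¬ Terminating m x) :
    chipDist m x = 0 := by
  have : (chipDist m x : ℤ) ≤ degSum (0 : V → ℤ) := chipDist_le m (le_refl _) (by rwa [add_zero])
  have h0 : degSum (0 : V → ℤ) = 0 := Finset.sum_const_zero
  omega

/-- degree of a non-terminating distribution is at least `chipDist m 0` -/
lemma dist0_le_deg [Nonempty V] (m : V → V → ℕ) (hconn : StronglyConnected m)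
    (hloop : Loopless m) {x : V → ℤ} (hx : ¬ Terminating m x) :
    (chipDist m (0 : V → ℤ) : ℤ) ≤ degSum x := by
  obtain ⟨y, hy0, hyd, hynt⟩ := nonterm_shift m hconn hloop hx
  rw [← hyd]
  exact chipDist_le m hy0 (by rwa [zero_add])

lemma nonterm_deg_nonneg [Nonempty V] (m : V → V → ℕ) (hconn : StronglyConnected m)
    (hloop : Loopless m) {x : V → ℤ} (hx : ¬ Terminating m x) : 0 ≤ degSum x := by
  have h := dist0_le_deg m hconn hloop hx
  have := Int.natCast_nonneg (chipDist m (0 : V → ℤ))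
  omega

/-- descent to a minimally non-terminating distribution -/
lemma exists_minNonTerm_le [Nonempty V] (m : V → V → ℕ) (hconn : StronglyConnected m)
    (hloop : Loopless m) {x : V → ℤ} (hx : ¬ Terminating m x) :
    ∃ z : V → ℤ, MinNonTerm m z ∧ z ≤ x := by
  suffices h : ∀ n : ℕ, ∀ x : V → ℤ, ¬ Terminating m x → (degSum x).toNat ≤ n →
      ∃ z : V → ℤ, MinNonTerm m z ∧ z ≤ x by
    exact h (degSum x).toNat x hx (le_refl _)
  intro n
  induction n with
  | zero =>
    intro x hx hd
    by_cases hmin : ∀ v : V, Terminating m (fun u => x u - (if u = v then 1 else 0))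
    · exact ⟨x, ⟨hx, hmin⟩, le_refl x⟩
    · exfalso
      push_neg at hmin
      obtain ⟨v, hv⟩ := hmin
      have hd' := nonterm_deg_nonneg m hconn hloop hv
      have hdx : degSum (fun u => x u - (if u = v then 1 else 0)) = degSum x - 1 := by
        unfold degSum
        rw [Finset.sum_sub_distrib]
        simp
      have hx0 : 0 ≤ degSum x := nonterm_deg_nonneg m hconn hloop hx
      omega
  | succ n ih =>
    intro x hx hd
    by_cases hmin : ∀ v : V, Terminating m (fun u => x u - (if u = v then 1 else 0))
    · exact ⟨x, ⟨hx, hmin⟩, le_refl x⟩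
    · push_neg at hmin
      obtain ⟨v, hv⟩ := hmin
      have hdx : degSum (fun u => x u - (if u = v then 1 else 0)) = degSum x - 1 := by
        unfold degSum
        rw [Finset.sum_sub_distrib]
        simp
      have hd' := nonterm_deg_nonneg m hconn hloop hv
      have hx0 : 0 ≤ degSum x := nonterm_deg_nonneg m hconn hloop hx
      obtain ⟨z, hz, hzle⟩ := ih _ hv (by omega)
      refine ⟨z, hz, le_trans hzle ?_⟩
      intro u
      simp only
      have : (0:ℤ) ≤ (if u = v then 1 else 0) := by positivity
      omega

/-- upper bound for chipDist via a non-terminating distribution -/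
lemma chipDist_le_posDeg (m : V → V → ℕ) {z : V → ℤ} (hz : ¬ Terminating m z) (x : V → ℤ) :
    (chipDist m x : ℤ) ≤ posDeg (z - x) := by
  set y : V → ℤ := fun v => max (z v - x v) 0 with hy
  have hy0 : 0 ≤ y := fun v => le_max_right _ _
  have hzle : z ≤ x + y := by
    intro v
    simp only [hy, Pi.add_apply]
    have := le_max_left (z v - x v) 0
    omega
  have hnt : ¬ Terminating m (x + y) := nonterm_mono m hzle hz
  have := chipDist_le m hy0 hnt
  have heq : degSum y = posDeg (z - x) := by
    unfold degSum posDeg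
    apply Finset.sum_congr rfl
    intro v _
    simp [hy]
  omega

/-- the minimum is attained at a minimally non-terminating distribution -/
lemma chipDist_attained [Nonempty V] (m : V → V → ℕ) (hconn : StronglyConnected m)
    (hloop : Loopless m) (x : V → ℤ) :
    ∃ z : V → ℤ, MinNonTerm m z ∧ (chipDist m x : ℤ) = posDeg (z - x) := by
  obtain ⟨y, hy0, hyd, hnt⟩ := chipDist_mem m hloop x
  obtain ⟨z, hz, hzle⟩ := exists_minNonTerm_le m hconn hloop hnt
  refine ⟨z, hz, le_antisymm (chipDist_le_posDeg m hz.1 x) ?_⟩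
  have hle : posDeg (z - x) ≤ degSum y := by
    unfold posDeg degSum
    apply Finset.sum_le_sum
    intro v _
    have h1 := hzle v
    have h2 := hy0 v
    simp only [Pi.add_apply] at h1
    simp only [Pi.sub_apply]
    have h3 : (0:ℤ) ≤ y v := h2
    omega
  omega

end Aux3
section Aux4
variable {V : Type} [Fintype V] [DecidableEq V]

lemma RR_backward [Nonempty V] (m : V → V → ℕ) (hconn : StronglyConnected m)
    (hloop : Loopless m) (K : V → ℤ)
    (H1 : ∀ x : V → ℤ, MinNonTerm m x → degSum x = (chipDist m (0 : V → ℤ) : ℤ))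
    (H2 : ∀ x : V → ℤ, MinNonTerm m x → MinNonTerm m (K - x)) :
    ∀ x : V → ℤ, (chipDist m x : ℤ) - (chipDist m (K - x) : ℤ)
      = (chipDist m (0 : V → ℤ) : ℤ) - degSum x := by
  obtain ⟨y, hy0, hyd, hynt⟩ := chipDist_mem m hloop (0 : V → ℤ)
  obtain ⟨z₀, hz₀, _⟩ := exists_minNonTerm_le m hconn hloop hynt
  have hK : degSum K = 2 * (chipDist m (0 : V → ℤ) : ℤ) := by
    have h1 := H1 z₀ hz₀
    have h2 := H1 _ (H2 z₀ hz₀)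
    rw [degSum_sub] at h2
    omega
  intro x
  obtain ⟨z, hz, hzd⟩ := chipDist_attained m hconn hloop x
  have e1 : (chipDist m (K - x) : ℤ) ≤ posDeg ((K - z) - (K - x)) :=
    chipDist_le_posDeg m (H2 z hz).1 (K - x)
  have e2 : (K - z) - (K - x) = x - z := by
    funext v; simp only [Pi.sub_apply]; ring
  have e3 : posDeg (x - z) = posDeg (z - x) - degSum (z - x) := by
    have h := posDeg_sub (z - x)
    have hneg : -(z - x) = x - z := by funext v; simp only [Pi.neg_apply, Pi.sub_apply]; ring
    rw [hneg] at h
    omega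
  have e4 : degSum (z - x) = (chipDist m (0 : V → ℤ) : ℤ) - degSum x := by
    rw [degSum_sub, H1 z hz]
  rw [e2] at e1
  obtain ⟨w, hw, hwd⟩ := chipDist_attained m hconn hloop (K - x)
  have f1 : (chipDist m x : ℤ) ≤ posDeg ((K - w) - x) :=
    chipDist_le_posDeg m (H2 w hw).1 x
  have f2 : (K - w) - x = -(w - (K - x)) := by
    funext v; simp only [Pi.neg_apply, Pi.sub_apply]; ring
  have f3 : posDeg (-(w - (K - x))) = posDeg (w - (K - x)) - degSum (w - (K - x)) := by
    have h := posDeg_sub (w - (K - x))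
    omega
  have f4 : degSum (w - (K - x)) = (chipDist m (0 : V → ℤ) : ℤ) - (degSum K - degSum x) := by
    rw [degSum_sub, degSum_sub, H1 w hw]
  rw [f2] at f1
  omega

lemma one_chip_nonneg (v : V) : (0 : V → ℤ) ≤ fun u => (if u = v then 1 else 0) := by
  intro u
  show (0:ℤ) ≤ _
  positivity

lemma degSum_one_chip (v : V) : degSum (fun u => (if u = v then (1:ℤ) else 0)) = 1 := by
  unfold degSum
  simp

lemma RR_forward [Nonempty V] (m : V → V → ℕ) (hconn : StronglyConnected m)
    (hloop : Loopless m) (K : V → ℤ) (t : ℤ)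
    (hRR : ∀ x : V → ℤ, (chipDist m x : ℤ) - (chipDist m (K - x) : ℤ) = t - degSum x) :
    (∀ x : V → ℤ, MinNonTerm m x → degSum x = (chipDist m (0 : V → ℤ) : ℤ)) ∧
      (∀ x : V → ℤ, MinNonTerm m x → MinNonTerm m (K - x)) := by
  have hdz : ∀ z : V → ℤ, ¬ Terminating m z → (chipDist m z : ℤ) = 0 := by
    intro z hzn
    have h := chipDist_eq_zero_of_nonterm m hzn
    exact_mod_cast h
  have hKz : ∀ z : V → ℤ, MinNonTerm m z → (chipDist m (K - z) : ℤ) = degSum z - t := by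
    intro z hzm
    have h := hRR z
    rw [hdz z hzm.1] at h
    omega
  -- F1
  have F1 : ∀ w y : V → ℤ, ¬ Terminating m w → 0 ≤ y →
      (chipDist m (K - (w + y)) : ℤ) = degSum w + degSum y - t := by
    intro w y hw hy
    have hle : w ≤ w + y := by
      intro v
      have h1 : (0:ℤ) ≤ y v := hy v
      show w v ≤ w v + y v
      omega
    have hnt : ¬ Terminating m (w + y) := nonterm_mono m hle hw
    have h := hRR (w + y)
    rw [hdz _ hnt, degSum_add] at h
    omega
  -- S nonempty
  obtain ⟨y, hy0, hyd, hynt⟩ := chipDist_mem m hloop (0 : V → ℤ)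
  have hynt' : ¬ Terminating m y := by rwa [zero_add] at hynt
  obtain ⟨z₀, hz₀, hz₀le⟩ := exists_minNonTerm_le m hconn hloop hynt'
  -- all minimally non-terminating have degree t
  have hdeg_t : ∀ z : V → ℤ, MinNonTerm m z → degSum z = t := by
    intro z hzm
    by_contra hne
    have h1 := hKz z hzm
    have hge : t ≤ degSum z := by
      have := Int.natCast_nonneg (chipDist m (K - z))
      omega
    have hgt : t < degSum z := lt_of_le_of_ne hge (fun h => hne h.symm)
    obtain ⟨y₀, hy₀0, hy₀d, hy₀nt⟩ := chipDist_mem m hloop (K - z)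
    obtain ⟨z₁, hz₁, hz₁le⟩ := exists_minNonTerm_le m hconn hloop hy₀nt
    set yy : V → ℤ := (K - z + y₀) - z₁ with hyy
    have hyy0 : (0 : V → ℤ) ≤ yy := by
      intro v
      have h2 : z₁ v ≤ (K - z + y₀) v := hz₁le v
      show (0:ℤ) ≤ (K - z + y₀) v - z₁ v
      omega
    have hF := F1 z₁ yy hz₁.1 hyy0
    have harg : K - (z₁ + yy) = z - y₀ := by
      funext u
      show K u - (z₁ u + ((K u - z u + y₀ u) - z₁ u)) = z u - y₀ u
      ring
    rw [harg] at hF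
    have hdyy : degSum yy = degSum (K - z + y₀) - degSum z₁ := degSum_sub _ _
    have hdKzy : degSum (K - z + y₀) = degSum (K - z) + degSum y₀ := degSum_add _ _
    have hdKz : degSum (K - z) = degSum K - degSum z := degSum_sub _ _
    -- degSum K = 2 t
    have hK2t : degSum K = 2 * t := by
      have h := hRR (K - z)
      have harg2 : K - (K - z) = z := by
        funext v; simp only [Pi.sub_apply]; ring
      rw [harg2, hdz z hzm.1, h1, hdKz] at h
      omega
    have hzero : (chipDist m (z - y₀) : ℤ) = 0 := by omega
    have hnt2 : ¬ Terminating m (z - y₀) := nonterm_of_chipDist_eq_zero m hloop hzero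
    have hy₀pos : ∃ v, 1 ≤ y₀ v := by
      by_contra hc
      push_neg at hc
      have hnp : degSum y₀ ≤ 0 := by
        apply Finset.sum_nonpos
        intro v _
        have := hc v
        omega
      omega
    obtain ⟨v, hv1⟩ := hy₀pos
    have hle2 : z - y₀ ≤ (fun u => z u - (if u = v then 1 else 0)) := by
      intro u
      show z u - y₀ u ≤ z u - (if u = v then 1 else 0)
      have h3 : (0:ℤ) ≤ y₀ u := hy₀0 u
      by_cases hu : u = v
      · subst hu; rw [if_pos rfl]; omega
      · rw [if_neg hu]; omega
    exact (nonterm_mono m hle2 hnt2) (hzm.2 v)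
  -- t = chipDist m 0
  have ht0 : t = (chipDist m (0 : V → ℤ) : ℤ) := by
    have hle1 : t ≤ (chipDist m (0 : V → ℤ) : ℤ) := by
      rw [← hdeg_t z₀ hz₀, ← hyd]
      exact degSum_mono hz₀le
    have hle2 : (chipDist m (0 : V → ℤ) : ℤ) ≤ t := by
      rw [← hdeg_t z₀ hz₀]
      exact dist0_le_deg m hconn hloop hz₀.1
    omega
  constructor
  · intro x hx
    rw [hdeg_t x hx, ht0]
  · intro z hzm
    have h1 := hKz z hzm
    rw [hdeg_t z hzm] at h1
    constructor
    · exact nonterm_of_chipDist_eq_zero m hloop (by omega)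
    · intro v
      have hF := F1 z (fun u => (if u = v then 1 else 0)) hzm.1 (one_chip_nonneg v)
      rw [degSum_one_chip, hdeg_t z hzm] at hF
      have harg : K - (z + fun u => (if u = v then (1:ℤ) else 0))
          = fun u => (K - z) u - (if u = v then 1 else 0) := by
        funext u
        simp only [Pi.sub_apply, Pi.add_apply]
        ring
      rw [harg] at hF
      by_contra hterm
      have := chipDist_eq_zero_of_nonterm m hterm
      rw [this] at hF
      omega

end Aux4


/-- A strongly connected digraph has the Riemann–Roch property iff every minimally
non-terminating chip-distribution has degree `dist(0)` and there is a `K` such that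
`K - x` is minimally non-terminating whenever `x` is; moreover, in this case the
Riemann–Roch formula holds with this `K` as canonical distribution and `t = dist(0)`. -/
theorem riemann_roch_characterization
    {V : Type} [Fintype V] [DecidableEq V] [Nonempty V]
    (m : V → V → ℕ) (hloop : Loopless m) (hconn : StronglyConnected m) :
    ((∃ K : V → ℤ, ∃ t : ℤ,
        ∀ x : V → ℤ, (chipDist m x : ℤ) - (chipDist m (K - x) : ℤ) = t - degSum x)
      ↔ ((∀ x : V → ℤ, MinNonTerm m x → degSum x = (chipDist m (0 : V → ℤ) : ℤ)) ∧
          ∃ K : V → ℤ, ∀ x : V → ℤ, MinNonTerm m x → MinNonTerm m (K - x)))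
    ∧ (∀ K : V → ℤ,
        (∀ x : V → ℤ, MinNonTerm m x → degSum x = (chipDist m (0 : V → ℤ) : ℤ)) →
        (∀ x : V → ℤ, MinNonTerm m x → MinNonTerm m (K - x)) →
        ∀ x : V → ℤ, (chipDist m x : ℤ) - (chipDist m (K - x) : ℤ)
          = (chipDist m (0 : V → ℤ) : ℤ) - degSum x) := by
  constructor
  · constructor
    · rintro ⟨K, t, hRR⟩
      obtain ⟨H1, H2⟩ := RR_forward m hconn hloop K t hRR
      exact ⟨H1, K, H2⟩
    · rintro ⟨H1, K, H2⟩
      exact ⟨K, (chipDist m (0 : V → ℤ) : ℤ), RR_backward m hconn hloop K H1 H2⟩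
  · intro K H1 H2
    exact RR_backward m hconn hloop K H1 H2
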